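/- arXiv:1706.00661 — 3 statements merged into one kernel-verified Lean document; each statement's English description precedes it below -/
import Mathlib

section
/- (Gale–Stewart) Every closed subset A of Baire space ℕ^ℕ gives a determined game: in the two-player game where players I and II alternately choose natural numbers producing x ∈ ℕ^ℕ, with I winning iff x ∈ A, one of the two players has a winning strategy. -/
open Classical

/-- Prefix of length `k` of a sequence. -/
def GSpref (x : ℕ → ℕ) (k : ℕ) : List ℕ := List.ofFn fun i : Fin k => x i

lemma GSpref_length (x : ℕ → ℕ) (k : ℕ) : (GSpref x k).length = k :=
  List.length_ofFn

lemma GSpref_succ (x : ℕ → ℕ) (k : ℕ) : GSpref x (k + 1) = GSpref x k ++ [x k] := by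
  rw [GSpref, List.ofFn_succ']
  simp [GSpref, List.concat_eq_append, Fin.castSucc]

lemma GSpref_eq_iff {x y : ℕ → ℕ} {k : ℕ} :
    GSpref x k = GSpref y k ↔ ∀ i < k, x i = y i := by
  constructor
  · intro h i hi
    have := congrArg (fun l : List ℕ => l[i]?) h
    simpa [GSpref, List.getElem?_ofFn, hi] using this
  · intro h
    apply List.ext_get (by simp [GSpref])
    intro i h1 h2
    simp only [GSpref, List.length_ofFn] at h1
    simp [GSpref, List.get_ofFn, h i h1]

lemma GSpref_getD {x : ℕ → ℕ} {j m : ℕ} (h : j < m) :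
    (GSpref x m).getD j 0 = x j := by
  rw [List.getD_eq_getElem _ _ (by simpa [GSpref_length] using h)]
  simp [GSpref, List.get_ofFn]

/-- Player II has a winning strategy from position `p`. -/
def WinII (A : Set (ℕ → ℕ)) (p : List ℕ) : Prop :=
  ∃ τ : List ℕ → ℕ, ∀ x : ℕ → ℕ, GSpref x p.length = p →
    (∀ n, p.length ≤ 2 * n + 1 → x (2 * n + 1) = τ (GSpref x (2 * n + 1))) → x ∉ A

lemma step_even {A : Set (ℕ → ℕ)} {p : List ℕ}
    (h : ∀ a, WinII A (p ++ [a])) : WinII A p := by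
  refine ⟨fun q => (h (q.getD p.length 0)).choose q, fun x hx hf => ?_⟩
  set a := x p.length with ha
  have hx' : GSpref x (p ++ [a]).length = p ++ [a] := by
    simp only [List.length_append, List.length_singleton]
    rw [GSpref_succ, hx]
  refine (h a).choose_spec x hx' ?_
  intro n hn
  simp only [List.length_append, List.length_singleton] at hn
  have h1 : p.length ≤ 2 * n + 1 := le_trans (Nat.le_succ _) hn
  have h2 : p.length < 2 * n + 1 := hn
  have hthis := hf n h1
  simp only at hthis
  rw [GSpref_getD h2] at hthis
  exact hthis

lemma step_odd {A : Set (ℕ → ℕ)} {p : List ℕ} (hlen : Odd p.length) {a : ℕ}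
    (h : WinII A (p ++ [a])) : WinII A p := by
  obtain ⟨τ, hτ⟩ := h
  refine ⟨fun q => if q.length = p.length then a else τ q, fun x hx hf => ?_⟩
  obtain ⟨m, hm⟩ := hlen
  have hxa : x p.length = a := by
    have := hf m (by omega)
    rw [show 2 * m + 1 = p.length by omega] at this
    rw [this]
    simp [GSpref_length]
  have hx' : GSpref x (p ++ [a]).length = p ++ [a] := by
    simp only [List.length_append, List.length_singleton]
    rw [GSpref_succ, hx, hxa]
  refine hτ x hx' ?_
  intro n hn
  simp only [List.length_append, List.length_singleton] at hn
  have := hf n (le_trans (Nat.le_succ _) hn)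
  rw [this]
  have : (GSpref x (2 * n + 1)).length ≠ p.length := by
    rw [GSpref_length]; omega
  simp [this]

lemma closed_escape {A : Set (ℕ → ℕ)} (hA : IsClosed A) {x : ℕ → ℕ} (hx : x ∉ A) :
    ∃ N, WinII A (GSpref x N) := by
  have hopen : IsOpen Aᶜ := hA.isOpen_compl
  obtain ⟨s, ⟨z, n, rfl⟩, hxs, hsub⟩ :=
    (PiNat.isTopologicalBasis_cylinders (fun _ : ℕ => ℕ)).exists_subset_of_mem_open hx hopen
  refine ⟨n, fun _ => 0, fun y hy _ => ?_⟩
  rw [GSpref_length] at hy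
  apply hsub
  intro i hi
  have h1 : y i = x i := GSpref_eq_iff.mp hy i hi
  have h2 : x i = z i := hxs i hi
  rw [h1, h2]

/-- Gale–Stewart: every closed game on `ℕ` is determined.  Players I and II
alternately choose naturals (I at even stages, II at odd stages), producing
`x : ℕ → ℕ`; I wins iff `x ∈ A`.  A strategy is a function from finite
positions to `ℕ`.  If `A` is closed, one of the players has a winning
strategy. -/
theorem gale_stewart_closed (A : Set (ℕ → ℕ)) (hA : IsClosed A) :
    (∃ σ : List ℕ → ℕ, ∀ x : ℕ → ℕ,
        (∀ n, x (2 * n) = σ (List.ofFn fun i : Fin (2 * n) => x i)) → x ∈ A) ∨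
    (∃ τ : List ℕ → ℕ, ∀ x : ℕ → ℕ,
        (∀ n, x (2 * n + 1) = τ (List.ofFn fun i : Fin (2 * n + 1) => x i)) → x ∉ A) := by
  by_cases h0 : WinII A []
  · right
    obtain ⟨τ, hτ⟩ := h0
    refine ⟨τ, fun x hx => ?_⟩
    refine hτ x (by simp [GSpref]) fun n _ => hx n
  · left
    refine ⟨fun p => if h : ∃ a, ¬ WinII A (p ++ [a]) then h.choose else 0, fun x hx => ?_⟩
    have key : ∀ k, ¬ WinII A (GSpref x k) := by
      intro k
      induction k with
      | zero => simpa [GSpref] using h0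
      | succ k ih =>
        rcases Nat.even_or_odd k with he | ho
        · -- I to move at k
          have hex : ∃ a, ¬ WinII A (GSpref x k ++ [a]) := by
            by_contra hc
            push_neg at hc
            exact ih (step_even hc)
          obtain ⟨m, hm⟩ := he
          have hxk : x k = hex.choose := by
            have h1 := hx m
            rw [show 2 * m = k from by omega] at h1
            rw [h1]
            exact dif_pos hex
          rw [GSpref_succ, hxk]
          exact hex.choose_spec
        · -- II to move at k
          intro hw
          exact ih (step_odd (by rwa [GSpref_length]) (by rwa [GSpref_succ] at hw))
    by_contra hxA
    obtain ⟨N, hN⟩ := closed_escape hA hxA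
    exact key N hN
end

section
/- (Kunen–Martin) Let κ be an infinite cardinal and let R ⊆ ℕ^ℕ × ℕ^ℕ be a wellfounded relation that is κ-Suslin, i.e. R = p[T] for some tree T on (ω×ω)×κ. Then the rank of R is strictly less than κ⁺. -/
namespace KMaux

open Cardinal Order

theorem take_ofFn' {α : Type*} (v : ℕ → α) {n m : ℕ} (h : n ≤ m) :
    (List.ofFn fun j : Fin m => v j).take n = List.ofFn fun j : Fin n => v j := by
  apply List.ext_getElem (by simp [h])
  intro i h1 h2
  simp [List.getElem_take]

variable (κ : Cardinal.{0})

theorem ord_pos' (hκ : ℵ₀ ≤ κ) : (0 : Ordinal) < κ.ord := by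
  have := Cardinal.ord_le_ord.2 hκ
  rw [Cardinal.ord_aleph0] at this
  exact lt_of_lt_of_le Ordinal.omega0_pos this

noncomputable def z (hκ : ℵ₀ ≤ κ) : κ.ord.ToType :=
  Ordinal.ToType.mk (o := κ.ord) ⟨0, ord_pos' κ hκ⟩

noncomputable def dec (a : κ.ord.ToType) : Ordinal :=
  ((Ordinal.ToType.mk (o := κ.ord)).symm a : Ordinal)

noncomputable def enc (hκ : ℵ₀ ≤ κ) (o : Ordinal) : κ.ord.ToType :=
  if h : o < κ.ord then Ordinal.ToType.mk (o := κ.ord) ⟨o, h⟩ else z κ hκ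

theorem dec_enc (hκ : ℵ₀ ≤ κ) {o : Ordinal} (h : o < κ.ord) :
    dec κ (enc κ hκ o) = o := by
  rw [enc, dif_pos h, dec]
  simp

/-- The type of nodes: a level, a matrix of naturals, a matrix of ordinals below `κ.ord`. -/
abbrev N := ℕ × (ℕ → ℕ → ℕ) × (ℕ → ℕ → κ.ord.ToType)

variable (T : Set (List ℕ × List ℕ × List Ordinal)) (hκ : ℵ₀ ≤ κ)

def Valid (s : N κ) : Prop :=
  (∀ i j, s.1 ≤ i ∨ s.1 ≤ j → s.2.1 i j = 0) ∧
  (∀ i j, s.1 ≤ i + 1 ∨ s.1 ≤ j → s.2.2 i j = z κ hκ) ∧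
  (∀ i, i + 1 < s.1 →
    ((List.ofFn fun j : Fin s.1 => s.2.1 (i+1) j),
     (List.ofFn fun j : Fin s.1 => s.2.1 i j),
     (List.ofFn fun j : Fin s.1 => dec κ (s.2.2 i j))) ∈ T)

def Step (t s : N κ) : Prop :=
  Valid κ T hκ s ∧ Valid κ T hκ t ∧ t.1 = s.1 + 1 ∧
  (∀ i j, i < s.1 → j < s.1 → t.2.1 i j = s.2.1 i j) ∧
  (∀ i j, i + 1 < s.1 → j < s.1 → t.2.2 i j = s.2.2 i j)

theorem step_wf
    (hT₂ : ∀ p ∈ T, ∀ k : ℕ, (p.1.take k, p.2.1.take k, p.2.2.take k) ∈ T)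
    (R : Set ((ℕ → ℕ) × (ℕ → ℕ)))
    (hR : R = {xy | ∃ f : ℕ → Ordinal, ∀ n : ℕ,
      ((List.ofFn fun i : Fin n => xy.1 i), (List.ofFn fun i : Fin n => xy.2 i),
        (List.ofFn fun i : Fin n => f i)) ∈ T})
    (hwf : WellFounded (fun x y : ℕ → ℕ => (x, y) ∈ R)) :
    WellFounded (Step κ T hκ) := by
  constructor
  intro s0
  by_contra hacc
  have hex : ∀ t : {t : N κ // ¬ Acc (Step κ T hκ) t},
      ∃ t' : {t : N κ // ¬ Acc (Step κ T hκ) t}, Step κ T hκ t'.1 t.1 := by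
    rintro ⟨t, ht⟩
    obtain ⟨w, hw1, hw2⟩ := exists_not_acc_lt_of_not_acc ht
    exact ⟨⟨w, hw1⟩, hw2⟩
  choose F hF using hex
  set g : ℕ → N κ := fun n => (F^[n] ⟨s0, hacc⟩).1 with hg
  have hstep : ∀ n, Step κ T hκ (g (n+1)) (g n) := by
    intro n
    have : F^[n+1] ⟨s0, hacc⟩ = F (F^[n] ⟨s0, hacc⟩) := Function.iterate_succ_apply' F n _
    simp only [hg, this]
    exact hF _
  have hlev : ∀ n, (g n).1 = (g 0).1 + n := by
    intro n
    induction n with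
    | zero => rfl
    | succ n ih => rw [(hstep n).2.2.1, ih]; omega
  have hmono : ∀ {k k' : ℕ}, k ≤ k' → (g k).1 ≤ (g k').1 := by
    intro k k' h; rw [hlev k, hlev k']; omega
  have hub : ∀ n, n ≤ (g n).1 := by intro n; rw [hlev n]; omega
  have stab_u : ∀ i j k k', k ≤ k' → i < (g k).1 → j < (g k).1 →
      (g k').2.1 i j = (g k).2.1 i j := by
    intro i j k k' hk hi hj
    induction k', hk using Nat.le_induction with
    | base => rfl
    | succ k' hk ih =>
      rw [(hstep k').2.2.2.1 i j (lt_of_lt_of_le hi (hmono hk)) (lt_of_lt_of_le hj (hmono hk)), ih]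
  have stab_h : ∀ i j k k', k ≤ k' → i + 1 < (g k).1 → j < (g k).1 →
      (g k').2.2 i j = (g k).2.2 i j := by
    intro i j k k' hk hi hj
    induction k', hk using Nat.le_induction with
    | base => rfl
    | succ k' hk ih =>
      rw [(hstep k').2.2.2.2 i j (lt_of_lt_of_le hi (hmono hk)) (lt_of_lt_of_le hj (hmono hk)), ih]
  -- the limit reals and witnesses
  set x : ℕ → ℕ → ℕ := fun i j => (g (i+j+1)).2.1 i j with hx
  set f : ℕ → ℕ → Ordinal := fun i j => dec κ ((g (i+j+2)).2.2 i j) with hf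
  have xval : ∀ k i j, i < (g k).1 → j < (g k).1 → (g k).2.1 i j = x i j := by
    intro k i j hi hj
    have h1 : i < (g (i+j+1)).1 := lt_of_lt_of_le (by omega) (hub (i+j+1))
    have h2 : j < (g (i+j+1)).1 := lt_of_lt_of_le (by omega) (hub (i+j+1))
    rcases le_total k (i+j+1) with h | h
    · exact (stab_u i j k (i+j+1) h hi hj).symm
    · exact stab_u i j (i+j+1) k h h1 h2
  have fval : ∀ k i j, i + 1 < (g k).1 → j < (g k).1 → dec κ ((g k).2.2 i j) = f i j := by
    intro k i j hi hj
    have h1 : i + 1 < (g (i+j+2)).1 := lt_of_lt_of_le (by omega) (hub (i+j+2))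
    have h2 : j < (g (i+j+2)).1 := lt_of_lt_of_le (by omega) (hub (i+j+2))
    rw [hf]
    rcases le_total k (i+j+2) with h | h
    · exact (congrArg (dec κ) (stab_h i j k (i+j+2) h hi hj)).symm
    · exact congrArg (dec κ) (stab_h i j (i+j+2) k h h1 h2)
  have hchain : ∀ i, (x (i+1), x i) ∈ R := by
    intro i
    rw [hR]
    refine ⟨f i, fun n => ?_⟩
    set K := n + i + 2 with hK
    have hm1 : n ≤ (g K).1 := le_trans (by omega) (hub K)
    have hm2 : i + 1 < (g K).1 := lt_of_lt_of_le (by omega) (hub K)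
    have hv := ((hstep K).1).2.2 i hm2
    have ht := hT₂ _ hv n
    simp only at ht
    have t1 : List.take n (List.ofFn fun j : Fin (g K).1 => (g K).2.1 (i+1) ↑j) =
        List.ofFn fun j : Fin n => (g K).2.1 (i+1) ↑j :=
      take_ofFn' (fun t => (g K).2.1 (i+1) t) hm1
    have t2 : List.take n (List.ofFn fun j : Fin (g K).1 => (g K).2.1 i ↑j) =
        List.ofFn fun j : Fin n => (g K).2.1 i ↑j :=
      take_ofFn' (fun t => (g K).2.1 i t) hm1
    have t3 : List.take n (List.ofFn fun j : Fin (g K).1 => dec κ ((g K).2.2 i ↑j)) =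
        List.ofFn fun j : Fin n => dec κ ((g K).2.2 i ↑j) :=
      take_ofFn' (fun t => dec κ ((g K).2.2 i t)) hm1
    rw [t1, t2, t3] at ht
    have e1 : (List.ofFn fun j : Fin n => (g K).2.1 (i+1) j) =
        List.ofFn fun j : Fin n => x (i+1) j := by
      congr 1; funext j
      exact xval K (i+1) j hm2 (lt_of_lt_of_le j.2 hm1)
    have e2 : (List.ofFn fun j : Fin n => (g K).2.1 i j) =
        List.ofFn fun j : Fin n => x i j := by
      congr 1; funext j
      exact xval K i j (by omega) (lt_of_lt_of_le j.2 hm1)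
    have e3 : (List.ofFn fun j : Fin n => dec κ ((g K).2.2 i j)) =
        List.ofFn fun j : Fin n => f i j := by
      congr 1; funext j
      exact fval K i j hm2 (lt_of_lt_of_le j.2 hm1)
    rw [e1, e2, e3] at ht
    exact ht
  -- contradiction with well-foundedness of R
  have : ∀ a : ℕ → ℕ, ¬ ∃ n, a = x n := by
    intro a
    induction a using hwf.induction with
    | _ a IH =>
      rintro ⟨n, rfl⟩
      exact IH (x (n+1)) (hchain n) ⟨n+1, rfl⟩
  exact this (x 0) ⟨0, rfl⟩

theorem card_pred (s : N κ) : #{t // Step κ T hκ t s} ≤ κ := by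
  set n := s.1 with hn
  have hbd : #(Fin ((n+1)*(n+1)) → ℕ × κ.ord.ToType) ≤ κ := by
    rw [Cardinal.mk_arrow]
    simp only [Cardinal.mk_fintype, Fintype.card_fin, Cardinal.lift_natCast, Cardinal.lift_id]
    have h1 : #(ℕ × κ.ord.ToType) = κ := by
      rw [Cardinal.mk_prod, Cardinal.mk_nat, Cardinal.mk_ord_toType, Cardinal.lift_id,
        Cardinal.lift_id]
      exact Cardinal.aleph0_mul_eq hκ
    rw [h1, Cardinal.power_natCast]
    exact Cardinal.power_nat_le hκ
  refine le_trans (Cardinal.mk_le_of_injective (f := fun t (p : Fin ((n+1)*(n+1))) =>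
    (t.1.2.1 ((p : ℕ) / (n+1)) ((p : ℕ) % (n+1)),
     t.1.2.2 ((p : ℕ) / (n+1)) ((p : ℕ) % (n+1)))) ?_) hbd
  intro t t' h
  have key : ∀ i j, i < n + 1 → j < n + 1 →
      t.1.2.1 i j = t'.1.2.1 i j ∧ t.1.2.2 i j = t'.1.2.2 i j := by
    intro i j hi hj
    have hp : (n+1)*i + j < (n+1)*(n+1) := by
      calc (n+1)*i + j < (n+1)*i + (n+1) := by omega
        _ = (n+1)*(i+1) := by ring
        _ ≤ (n+1)*(n+1) := Nat.mul_le_mul_left _ hi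
    have hcf := congrFun h (⟨(n+1)*i + j, hp⟩ : Fin ((n+1)*(n+1)))
    have hdiv : ((n+1)*i + j) / (n+1) = i := by
      rw [Nat.mul_add_div (by omega)]
      simp [Nat.div_eq_of_lt hj]
    have hmod : ((n+1)*i + j) % (n+1) = j := by
      rw [Nat.mul_add_mod]
      exact Nat.mod_eq_of_lt hj
    simp only [hdiv, hmod] at hcf
    exact ⟨congrArg Prod.fst hcf, congrArg Prod.snd hcf⟩
  have hlt : t.1.1 = n + 1 := t.2.2.2.1
  have hlt' : t'.1.1 = n + 1 := t'.2.2.2.1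
  have hvt : Valid κ T hκ t.1 := t.2.2.1
  have hvt' : Valid κ T hκ t'.1 := t'.2.2.1
  apply Subtype.ext
  apply Prod.ext
  · rw [hlt, hlt']
  apply Prod.ext
  · funext i j
    by_cases hij : i < n + 1 ∧ j < n + 1
    · exact (key i j hij.1 hij.2).1
    · have hc : t.1.1 ≤ i ∨ t.1.1 ≤ j := by rw [hlt]; omega
      have hc' : t'.1.1 ≤ i ∨ t'.1.1 ≤ j := by rw [hlt']; omega
      rw [hvt.1 i j hc, hvt'.1 i j hc']
  · funext i j
    by_cases hij : i < n + 1 ∧ j < n + 1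
    · exact (key i j hij.1 hij.2).2
    · have hc : t.1.1 ≤ i + 1 ∨ t.1.1 ≤ j := by rw [hlt]; omega
      have hc' : t'.1.1 ≤ i + 1 ∨ t'.1.1 ≤ j := by rw [hlt']; omega
      rw [hvt.2.1 i j hc, hvt'.2.1 i j hc']

theorem rank_lt (wfS : WellFounded (Step κ T hκ)) (s : N κ) :
    (wfS.apply s).rank < (succ κ).ord := by
  induction s using wfS.induction with
  | _ s IH =>
    rw [Acc.rank_eq]
    apply Ordinal.iSup_lt_ord
    · rw [(Cardinal.isRegular_succ hκ).cof_eq]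
      exact (card_pred κ T hκ s).trans_lt (Order.lt_succ κ)
    · rintro ⟨t, ht⟩
      have hr : ((wfS.apply s).inv ht).rank = (wfS.apply t).rank := rfl
      rw [hr]
      exact (Cardinal.isSuccLimit_ord (hκ.trans (Order.le_succ κ))).succ_lt (IH t ht)

section

variable (W : (ℕ → ℕ) → (ℕ → ℕ) → ℕ → Ordinal)

noncomputable def node (m : ℕ) (c : ℕ → ℕ → ℕ) : N κ :=
  (m, fun i j => if i < m ∧ j < m then c i j else 0,
      fun i j => if i + 1 < m ∧ j < m then enc κ hκ (W (c (i+1)) (c i) j) else z κ hκ)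

variable (R : Set ((ℕ → ℕ) × (ℕ → ℕ)))

theorem valid_node (hW : ∀ a b : ℕ → ℕ, (a, b) ∈ R → ∀ n : ℕ,
      ((List.ofFn fun i : Fin n => a i), (List.ofFn fun i : Fin n => b i),
        (List.ofFn fun i : Fin n => W a b i)) ∈ T)
    (hWlt : ∀ a b : ℕ → ℕ, (a, b) ∈ R → ∀ j, W a b j < κ.ord)
    (m : ℕ) (c : ℕ → ℕ → ℕ)
    (hc : ∀ i, i + 1 < m → (c (i+1), c i) ∈ R) :
    Valid κ T hκ (node κ hκ W m c) := by
  refine ⟨?_, ?_, ?_⟩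
  · intro i j hij
    dsimp only [node] at hij ⊢
    rw [if_neg (by omega)]
  · intro i j hij
    dsimp only [node] at hij ⊢
    rw [if_neg (by omega)]
  · intro i him
    dsimp only [node] at him ⊢
    have e1 : (List.ofFn fun j : Fin m =>
        if i + 1 < m ∧ (j : ℕ) < m then c (i+1) j else 0) =
        List.ofFn fun j : Fin m => c (i+1) j := by
      congr 1; funext j; rw [if_pos ⟨him, j.2⟩]
    have e2 : (List.ofFn fun j : Fin m =>
        if i < m ∧ (j : ℕ) < m then c i j else 0) =
        List.ofFn fun j : Fin m => c i j := by
      congr 1; funext j; rw [if_pos ⟨by omega, j.2⟩]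
    have e3 : (List.ofFn fun j : Fin m => dec κ
        (if i + 1 < m ∧ (j : ℕ) < m then enc κ hκ (W (c (i+1)) (c i) j) else z κ hκ)) =
        List.ofFn fun j : Fin m => W (c (i+1)) (c i) j := by
      congr 1; funext j
      rw [if_pos ⟨him, j.2⟩, dec_enc κ hκ (hWlt _ _ (hc i him) j)]
    rw [e1, e2, e3]
    exact hW _ _ (hc i him) m

theorem chain_ext (k : ℕ) (c : ℕ → ℕ → ℕ) (y : ℕ → ℕ)
    (hc : ∀ i, i + 1 < k + 1 → (c (i+1), c i) ∈ R) (hy : (y, c k) ∈ R) :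
    ∀ i, i + 1 < k + 2 →
      ((fun i' => if i' = k+1 then y else c i') (i+1),
       (fun i' => if i' = k+1 then y else c i') i) ∈ R := by
  intro i hi
  by_cases h : i + 1 = k + 1
  · have hik : i = k := by omega
    simp only [if_pos h, if_neg (show ¬ i = k + 1 by omega)]
    rw [hik]
    exact hy
  · have h1 : i + 1 < k + 1 := by omega
    simp only [if_neg h, if_neg (show ¬ i = k + 1 by omega)]
    exact hc i h1

theorem step_node (hW : ∀ a b : ℕ → ℕ, (a, b) ∈ R → ∀ n : ℕ,
      ((List.ofFn fun i : Fin n => a i), (List.ofFn fun i : Fin n => b i),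
        (List.ofFn fun i : Fin n => W a b i)) ∈ T)
    (hWlt : ∀ a b : ℕ → ℕ, (a, b) ∈ R → ∀ j, W a b j < κ.ord)
    (k : ℕ) (c : ℕ → ℕ → ℕ) (y : ℕ → ℕ)
    (hc : ∀ i, i + 1 < k + 1 → (c (i+1), c i) ∈ R) (hy : (y, c k) ∈ R) :
    Step κ T hκ (node κ hκ W (k+2) (fun i' => if i' = k+1 then y else c i'))
      (node κ hκ W (k+1) c) := by
  refine ⟨valid_node κ T hκ W R hW hWlt (k+1) c hc,
    valid_node κ T hκ W R hW hWlt (k+2) _ (chain_ext R k c y hc hy), rfl, ?_, ?_⟩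
  · intro i j hi hj
    dsimp only [node] at hi hj ⊢
    rw [if_pos (show i < k + 2 ∧ j < k + 2 by omega),
      if_neg (show ¬ i = k + 1 by omega),
      if_pos (show i < k + 1 ∧ j < k + 1 from ⟨hi, hj⟩)]
  · intro i j hi hj
    dsimp only [node] at hi hj ⊢
    rw [if_pos (show i + 1 < k + 2 ∧ j < k + 2 by omega),
      if_neg (show ¬ i + 1 = k + 1 by omega),
      if_neg (show ¬ i = k + 1 by omega),
      if_pos (show i + 1 < k + 1 ∧ j < k + 1 from ⟨hi, hj⟩)]

theorem main_le (hW : ∀ a b : ℕ → ℕ, (a, b) ∈ R → ∀ n : ℕ,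
      ((List.ofFn fun i : Fin n => a i), (List.ofFn fun i : Fin n => b i),
        (List.ofFn fun i : Fin n => W a b i)) ∈ T)
    (hWlt : ∀ a b : ℕ → ℕ, (a, b) ∈ R → ∀ j, W a b j < κ.ord)
    (hwf : WellFounded (fun x y : ℕ → ℕ => (x, y) ∈ R))
    (wfS : WellFounded (Step κ T hκ)) (x : ℕ → ℕ) :
    ∀ (k : ℕ) (c : ℕ → ℕ → ℕ), (∀ i, i + 1 < k + 1 → (c (i+1), c i) ∈ R) → c k = x →
      (hwf.apply x).rank ≤ (wfS.apply (node κ hκ W (k+1) c)).rank := by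
  induction x using hwf.induction with
  | _ x IH =>
    intro k c hc hck
    rw [Acc.rank_eq]
    refine ciSup_le' ?_
    rintro ⟨y, hy⟩
    have hy' : (y, c k) ∈ R := by rw [hck]; exact hy
    have hstep := step_node κ T hκ W R hW hWlt k c y hc hy'
    have h1 : (hwf.apply y).rank ≤
        (wfS.apply (node κ hκ W (k+2) (fun i' => if i' = k+1 then y else c i'))).rank :=
      IH y hy (k+1) _ (chain_ext R k c y hc hy') (by rw [if_pos rfl])
    have h2 := Acc.rank_lt_of_rel (wfS.apply (node κ hκ W (k+1) c)) hstep
    exact Order.succ_le_of_lt (lt_of_le_of_lt h1 h2)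

theorem node_one (x : ℕ → ℕ) :
    node κ hκ W 1 (fun _ => x) = node κ hκ W 1 (fun _ _ => x 0) := by
  refine Prod.ext rfl (Prod.ext ?_ ?_)
  · funext i j
    dsimp only [node]
    by_cases hij : i < 1 ∧ j < 1
    · have hj : j = 0 := by omega
      rw [if_pos hij, if_pos hij, hj]
    · rw [if_neg hij, if_neg hij]
  · funext i j
    dsimp only [node]
    rw [if_neg (by omega), if_neg (by omega)]

end

end KMaux

/-- Kunen–Martin: if `R ⊆ ℕ^ℕ × ℕ^ℕ` is a wellfounded relation which is
`κ`-Suslin, i.e. `R = p[T]` for a tree `T` on `(ω × ω) × κ`, then the rank of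
`R` (the supremum of `rank(x) + 1`) is strictly less than `κ⁺`. -/
theorem kunen_martin (κ : Cardinal) (hκ : Cardinal.aleph0 ≤ κ)
    (T : Set (List ℕ × List ℕ × List Ordinal))
    (hT₁ : ∀ p ∈ T, p.1.length = p.2.1.length ∧ p.1.length = p.2.2.length ∧
      ∀ o ∈ p.2.2, o < κ.ord)
    (hT₂ : ∀ p ∈ T, ∀ k, (p.1.take k, p.2.1.take k, p.2.2.take k) ∈ T)
    (R : Set ((ℕ → ℕ) × (ℕ → ℕ)))
    (hR : R = {xy | ∃ f : ℕ → Ordinal, ∀ n : ℕ,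
      ((List.ofFn fun i : Fin n => xy.1 i), (List.ofFn fun i : Fin n => xy.2 i),
        (List.ofFn fun i : Fin n => f i)) ∈ T})
    (hwf : WellFounded (fun x y : ℕ → ℕ => (x, y) ∈ R)) :
    (⨆ x : ℕ → ℕ, Order.succ ((hwf.apply x).rank)) < (Order.succ κ).ord := by
  classical
  have hWex : ∀ a b : ℕ → ℕ, ∃ f : ℕ → Ordinal, (a, b) ∈ R → ∀ n : ℕ,
      ((List.ofFn fun i : Fin n => a i), (List.ofFn fun i : Fin n => b i),
        (List.ofFn fun i : Fin n => f i)) ∈ T := by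
    intro a b
    by_cases hab : (a, b) ∈ R
    · rw [hR] at hab
      obtain ⟨f, hf⟩ := hab
      exact ⟨f, fun _ => hf⟩
    · exact ⟨fun _ => 0, fun h => absurd h hab⟩
  choose W hW using hWex
  have hWlt : ∀ a b : ℕ → ℕ, (a, b) ∈ R → ∀ j, W a b j < κ.ord := by
    intro a b hab j
    refine (hT₁ _ (hW a b hab (j+1))).2.2 _ ?_
    rw [List.mem_ofFn]
    exact ⟨⟨j, Nat.lt_succ_self j⟩, rfl⟩
  have wfS : WellFounded (KMaux.Step κ T hκ) := KMaux.step_wf κ T hκ hT₂ R hR hwf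
  have hbound : (⨆ k : ℕ,
      Order.succ ((wfS.apply (KMaux.node κ hκ W 1 (fun _ _ => k))).rank)) <
      (Order.succ κ).ord := by
    apply Ordinal.iSup_lt_ord
    · rw [(Cardinal.isRegular_succ hκ).cof_eq, Cardinal.mk_nat]
      exact hκ.trans_lt (Order.lt_succ κ)
    · intro k
      exact (Cardinal.isSuccLimit_ord (hκ.trans (Order.le_succ κ))).succ_lt
        (KMaux.rank_lt κ T hκ wfS _)
  refine lt_of_le_of_lt (ciSup_le' ?_) hbound
  intro x
  have h1 : (hwf.apply x).rank ≤
      (wfS.apply (KMaux.node κ hκ W 1 (fun _ => x))).rank :=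
    KMaux.main_le κ T hκ W R hW hWlt hwf wfS x 0 (fun _ => x)
      (fun i hi => absurd hi (by omega)) rfl
  rw [KMaux.node_one κ hκ W x] at h1
  exact le_trans (Order.succ_le_succ h1) (Ordinal.le_iSup _ (x 0))
end

section
/- The map ξ ↦ ξ̂ is strictly increasing on the interval (0, ω^{ω^ω}), and ω ≤ ξ̂ < ω_ω for all 0 < ξ < ω^{ω^ω}. -/
/-- The hat of a monomial: `(ω^η)^ := u_{n₁+1}·…·u_{n_k+1}` where
`η = ω^{n₁} + … + ω^{n_k}` in Cantor normal form (`u_n` being the `n`-th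
uncountable initial ordinal), and `(ω^0)^ = 1̂ = ω`. -/
noncomputable def hatMono (η : Ordinal) : Ordinal :=
  if η = 0 then Ordinal.omega0
  else ((Ordinal.CNF Ordinal.omega0 η).map
    fun p => ((Cardinal.aleph (p.1 + 1)).ord) ^ p.2).foldr (· * ·) 1

/-- The hat operation `ξ ↦ ξ̂`: if `ξ = ω^{η₁} + … + ω^{η_m}` in Cantor normal
form then `ξ̂ = (ω^{η₁})^ + … + (ω^{η_m})^`. -/
noncomputable def hatFn (ξ : Ordinal) : Ordinal :=
  ((Ordinal.CNF Ordinal.omega0 ξ).map fun p => hatMono p.1 * p.2).foldr (· + ·) 0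

open Ordinal Cardinal

namespace HatAux

/-- The generic "CNF substitution sum" `Σ f(ηᵢ)·cᵢ`. -/
noncomputable def cnfSum (f : Ordinal → Ordinal) (ξ : Ordinal) : Ordinal :=
  ((Ordinal.CNF Ordinal.omega0 ξ).map fun p => f p.1 * p.2).foldr (· + ·) 0

theorem cnfSum_zero (f : Ordinal → Ordinal) : cnfSum f 0 = 0 := by
  simp [cnfSum, Ordinal.CNF.zero_right]

theorem cnfSum_ne_zero (f : Ordinal → Ordinal) {ξ : Ordinal} (h : ξ ≠ 0) :
    cnfSum f ξ = f (log ω ξ) * (ξ / ω ^ log ω ξ) + cnfSum f (ξ % ω ^ log ω ξ) := by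
  rw [cnfSum, Ordinal.CNF.ne_zero h, List.map_cons, List.foldr_cons]; rfl

section generic

variable {f : Ordinal → Ordinal} (hω : ∀ η, ω ≤ f η)
  (hp : ∀ η, Ordinal.Principal (· + ·) (f η))
  (hmul : ∀ ⦃η η'⦄, η < η' → f η * ω ≤ f η')

include hω in
theorem le_cnfSum {ξ : Ordinal} (h : ξ ≠ 0) : f (log ω ξ) ≤ cnfSum f ξ := by
  rw [cnfSum_ne_zero f h]
  have hc : 1 ≤ ξ / ω ^ log ω ξ := by
    rw [Order.one_le_iff_pos, Ordinal.div_pos (opow_ne_zero _ omega0_ne_zero)]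
    exact Ordinal.opow_log_le_self _ h
  calc f (log ω ξ) = f (log ω ξ) * 1 := (mul_one _).symm
    _ ≤ f (log ω ξ) * (ξ / ω ^ log ω ξ) := mul_le_mul_right hc _
    _ ≤ _ := le_self_add

include hω in
theorem pos_cnfSum {ξ : Ordinal} (h : ξ ≠ 0) : 0 < cnfSum f ξ :=
  lt_of_lt_of_le omega0_pos ((hω _).trans (le_cnfSum hω h))

include hω hp hmul in
theorem cnfSum_lt_f : ∀ ξ : Ordinal, ∀ {η}, log ω ξ < η → cnfSum f ξ < f η := by
  intro ξ
  induction ξ using Ordinal.induction with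
  | _ ξ IH =>
    intro η hη
    rcases eq_or_ne ξ 0 with rfl | h0
    · rw [cnfSum_zero]; exact lt_of_lt_of_le omega0_pos (hω η)
    rw [cnfSum_ne_zero f h0]
    apply hp η
    · calc f (log ω ξ) * (ξ / ω ^ log ω ξ) < f (log ω ξ) * ω := by
            rw [mul_lt_mul_iff_right₀ (lt_of_lt_of_le omega0_pos (hω _))]
            exact Ordinal.div_opow_log_lt ξ one_lt_omega0
        _ ≤ f η := hmul hη
    · exact IH _ (Ordinal.mod_opow_log_lt_self ω h0)
        (lt_of_le_of_lt (Ordinal.log_mono_right _ (Ordinal.mod_le _ _)) hη)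

include hω hp hmul in
theorem cnfSum_rest_lt {ξ : Ordinal} : cnfSum f (ξ % ω ^ log ω ξ) < f (log ω ξ) := by
  rcases eq_or_ne (ξ % ω ^ log ω ξ) 0 with h | h
  · rw [h, cnfSum_zero]; exact lt_of_lt_of_le omega0_pos (hω _)
  · apply cnfSum_lt_f hω hp hmul
    rw [← Ordinal.lt_opow_iff_log_lt one_lt_omega0 h]
    exact Ordinal.mod_lt _ (opow_ne_zero _ omega0_ne_zero)

include hω hp hmul in
theorem cnfSum_strictMono : ∀ ζ ξ : Ordinal, ξ < ζ → cnfSum f ξ < cnfSum f ζ := by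
  intro ζ
  induction ζ using Ordinal.induction with
  | _ ζ IH =>
    intro ξ hξζ
    have hζ0 : ζ ≠ 0 := (pos_iff_ne_zero).1 ((show (0 : Ordinal) ≤ ξ from zero_le).trans_lt hξζ)
    rcases eq_or_ne ξ 0 with rfl | h0
    · rw [cnfSum_zero]; exact pos_cnfSum hω hζ0
    have hCpos : 1 ≤ ζ / ω ^ log ω ζ := by
      rw [Order.one_le_iff_pos, Ordinal.div_pos (opow_ne_zero _ omega0_ne_zero)]
      exact Ordinal.opow_log_le_self _ hζ0
    have hlog : log ω ξ ≤ log ω ζ := Ordinal.log_mono_right _ hξζ.le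
    rw [cnfSum_ne_zero f hζ0]
    rcases lt_or_eq_of_le hlog with hlt | heq
    · calc cnfSum f ξ < f (log ω ζ) := cnfSum_lt_f hω hp hmul ξ hlt
        _ = f (log ω ζ) * 1 := (mul_one _).symm
        _ ≤ f (log ω ζ) * (ζ / ω ^ log ω ζ) := mul_le_mul_right hCpos _
        _ ≤ _ := le_self_add
    · have hdiv : ξ / ω ^ log ω ζ ≤ ζ / ω ^ log ω ζ := by
        have hlt2 : ξ / ω ^ log ω ζ < ζ / ω ^ log ω ζ + 1 := by
          rw [Ordinal.div_lt (opow_ne_zero _ omega0_ne_zero), mul_add_one]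
          calc ξ < ζ := hξζ
            _ = ω ^ log ω ζ * (ζ / ω ^ log ω ζ) + ζ % ω ^ log ω ζ :=
              (Ordinal.div_add_mod _ _).symm
            _ ≤ ω ^ log ω ζ * (ζ / ω ^ log ω ζ) + ω ^ log ω ζ :=
              add_le_add_right (Ordinal.mod_lt _ (opow_ne_zero _ omega0_ne_zero)).le _
        rwa [Ordinal.add_one_eq_succ, Order.lt_succ_iff] at hlt2
      have hr : cnfSum f (ξ % ω ^ log ω ζ) < f (log ω ζ) := by
        have := cnfSum_rest_lt hω hp hmul (ξ := ξ)
        rwa [heq] at this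
      rw [cnfSum_ne_zero f h0, heq]
      rcases lt_or_eq_of_le hdiv with hc | hc
      · calc f (log ω ζ) * (ξ / ω ^ log ω ζ) + cnfSum f (ξ % ω ^ log ω ζ)
            < f (log ω ζ) * (ξ / ω ^ log ω ζ) + f (log ω ζ) := add_lt_add_right hr _
          _ = f (log ω ζ) * (ξ / ω ^ log ω ζ + 1) := by rw [mul_add, mul_one]
          _ ≤ f (log ω ζ) * (ζ / ω ^ log ω ζ) := by
              apply mul_le_mul_right
              rwa [Ordinal.add_one_eq_succ, Order.succ_le_iff]
          _ ≤ _ := le_self_add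
      · have hrR : ξ % ω ^ log ω ζ < ζ % ω ^ log ω ζ := by
          have h' : ω ^ log ω ζ * (ζ / ω ^ log ω ζ) + ξ % ω ^ log ω ζ
              < ω ^ log ω ζ * (ζ / ω ^ log ω ζ) + ζ % ω ^ log ω ζ := by
            calc ω ^ log ω ζ * (ζ / ω ^ log ω ζ) + ξ % ω ^ log ω ζ
                = ω ^ log ω ζ * (ξ / ω ^ log ω ζ) + ξ % ω ^ log ω ζ := by rw [hc]
              _ = ξ := Ordinal.div_add_mod _ _
              _ < ζ := hξζ
              _ = _ := (Ordinal.div_add_mod _ _).symm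
          exact lt_of_add_lt_add_left h'
        rw [hc]
        exact add_lt_add_right
          (IH _ (Ordinal.mod_opow_log_lt_self ω hζ0) _ hrR) _

theorem cnfSum_lt_of_lt {B : Ordinal} (hB0 : 0 < B)
    (hBp : Ordinal.Principal (· + ·) B)
    (hBm : ∀ a c, a < B → c < ω → a * c < B) :
    ∀ ξ : Ordinal, (∀ η, η ≤ log ω ξ → f η < B) → cnfSum f ξ < B := by
  intro ξ
  induction ξ using Ordinal.induction with
  | _ ξ IH =>
    intro hf
    rcases eq_or_ne ξ 0 with rfl | h0
    · rw [cnfSum_zero]; exact hB0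
    rw [cnfSum_ne_zero f h0]
    apply hBp
    · exact hBm _ _ (hf _ le_rfl) (Ordinal.div_opow_log_lt ξ one_lt_omega0)
    · exact IH _ (Ordinal.mod_opow_log_lt_self ω h0) fun η hη =>
        hf η (hη.trans (Ordinal.log_mono_right _ (Ordinal.mod_le _ _)))

end generic

/-! ### `ω ^ (ℵ_(o+1)).ord` fixed point -/

theorem omega0_opow_lt_ord_aleph_succ (o : Ordinal) :
    ∀ b < (ℵ_ (o + 1)).ord, ω ^ b < (ℵ_ (o + 1)).ord := by
  have hreg : (ℵ_ (o + 1)).IsRegular := by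
    rw [Ordinal.add_one_eq_succ]; exact Cardinal.isRegular_aleph_succ o
  have hω : ω ≤ (ℵ_ (o + 1)).ord := by
    rw [← Cardinal.ord_aleph0]; exact Cardinal.ord_le_ord.2 (aleph0_le_aleph _)
  have h0 : ℵ₀ < ℵ_ (o + 1) := by
    rw [← Cardinal.aleph_zero]
    exact aleph_lt_aleph.2 (zero_lt_one.trans_le le_add_self)
  intro b
  induction b using Ordinal.induction with
  | _ b IH =>
    intro hb
    rcases Ordinal.zero_or_succ_or_isSuccLimit b with rfl | ⟨c, rfl⟩ | hlim
    · rw [opow_zero]; exact one_lt_omega0.trans_le hω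
    · rw [opow_succ]
      have h1 : ω ^ c < (ℵ_ (o + 1)).ord := IH c (Order.lt_succ c) ((Order.lt_succ c).trans hb)
      rw [Cardinal.lt_ord] at h1 ⊢
      rw [Ordinal.card_mul, Ordinal.card_omega0]
      exact Cardinal.mul_lt_of_lt (aleph0_le_aleph _) h1 h0
    · have hle : ω ^ b ≤ (ℵ_ (o + 1)).ord :=
        (Ordinal.opow_le_of_isSuccLimit omega0_ne_zero hlim).2 fun c hc => (IH c hc (hc.trans hb)).le
      rcases hle.lt_or_eq with h | h
      · exact h
      · exfalso
        have h1 : Ordinal.cof (ω ^ b) = Ordinal.cof b :=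
          Ordinal.cof_map_of_isNormal (Ordinal.isNormal_opow one_lt_omega0) hlim
        rw [h, hreg.cof_eq] at h1
        have h2 : Ordinal.cof b ≤ b.card := Ordinal.cof_le_card b
        have h3 : b.card < ℵ_ (o + 1) := Cardinal.lt_ord.1 hb
        rw [← h1] at h2
        exact absurd (h2.trans_lt h3) (lt_irrefl _)

theorem omega0_opow_ord_aleph_succ (o : Ordinal) :
    ω ^ (ℵ_ (o + 1)).ord = (ℵ_ (o + 1)).ord := by
  apply le_antisymm
  · exact (Ordinal.opow_le_of_isSuccLimit omega0_ne_zero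
      (Cardinal.isSuccLimit_ord (aleph0_le_aleph _))).2
      fun c hc => (omega0_opow_lt_ord_aleph_succ o c hc).le
  · exact Ordinal.right_le_opow _ one_lt_omega0

/-! ### The exponent substitution `f0` -/

noncomputable def f0 (η : Ordinal) : Ordinal := (ℵ_ (η + 1)).ord

theorem hω0 : ∀ η, ω ≤ f0 η := fun _ => by
  rw [f0, ← Cardinal.ord_aleph0]; exact Cardinal.ord_le_ord.2 (aleph0_le_aleph _)

theorem hp0 : ∀ η, Ordinal.Principal (· + ·) (f0 η) := fun _ =>
  Ordinal.isPrincipal_add_ord (aleph0_le_aleph _)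

theorem hmul0 : ∀ ⦃η η'⦄, η < η' → f0 η * ω ≤ f0 η' := by
  intro η η' h
  have : f0 η * ω < f0 η' := by
    rw [f0, f0, Cardinal.lt_ord, Ordinal.card_mul, Ordinal.card_omega0, Cardinal.card_ord,
      Cardinal.mul_aleph0_eq (aleph0_le_aleph _)]
    apply aleph_lt_aleph.2
    rw [Ordinal.add_one_eq_succ, Ordinal.add_one_eq_succ]
    exact Order.succ_lt_succ h
  exact this.le

/-! ### `hatMono` as `ω ^ cnfSum f0` -/

theorem foldr_aux : ∀ l : List (Ordinal × Ordinal),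
    (l.map fun p => ((Cardinal.aleph (p.1 + 1)).ord) ^ p.2).foldr (· * ·) 1
      = ω ^ ((l.map fun p => f0 p.1 * p.2).foldr (· + ·) 0)
  | [] => by simp
  | p :: l => by
    rw [List.map_cons, List.foldr_cons, List.map_cons, List.foldr_cons, foldr_aux l,
      opow_add, opow_mul, f0, omega0_opow_ord_aleph_succ]

theorem hatMono_eq {η : Ordinal} (h : η ≠ 0) : hatMono η = ω ^ cnfSum f0 η := by
  rw [hatMono, if_neg h, cnfSum]
  exact foldr_aux _

theorem hatMono_eq' (η : Ordinal) :
    hatMono η = ω ^ (if η = 0 then 1 else cnfSum f0 η) := by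
  rcases eq_or_ne η 0 with rfl | h
  · simp [hatMono, opow_one]
  · rw [hatMono_eq h, if_neg h]

theorem one_lt_cnfSum_f0 {η : Ordinal} (h : η ≠ 0) : 1 < cnfSum f0 η :=
  lt_of_lt_of_le (one_lt_omega0) ((hω0 _).trans (le_cnfSum hω0 h))

theorem hmω : ∀ η, ω ≤ hatMono η := by
  intro η
  rw [hatMono_eq']
  calc ω = ω ^ (1 : Ordinal) := (opow_one ω).symm
    _ ≤ _ := by
      apply Ordinal.opow_le_opow_right omega0_pos
      rcases eq_or_ne η 0 with rfl | h
      · simp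
      · rw [if_neg h]; exact (one_lt_cnfSum_f0 h).le

theorem hmp : ∀ η, Ordinal.Principal (· + ·) (hatMono η) := by
  intro η
  rw [hatMono_eq']
  exact Ordinal.principal_add_omega0_opow _

theorem hmmul : ∀ ⦃η η'⦄, η < η' → hatMono η * ω ≤ hatMono η' := by
  intro η η' h
  have h' : η' ≠ 0 := ((show (0 : Ordinal) ≤ η from zero_le).trans_lt h).ne'
  rw [hatMono_eq' η, hatMono_eq h']
  have he : (if η = 0 then 1 else cnfSum f0 η) < cnfSum f0 η' := by
    rcases eq_or_ne η 0 with rfl | h0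
    · rw [if_pos rfl]; exact one_lt_cnfSum_f0 h'
    · rw [if_neg h0]; exact cnfSum_strictMono hω0 hp0 hmul0 η' η h
  calc ω ^ (if η = 0 then 1 else cnfSum f0 η) * ω
      = ω ^ ((if η = 0 then 1 else cnfSum f0 η) + 1) := by rw [opow_add, opow_one]
    _ ≤ ω ^ cnfSum f0 η' := by
        apply Ordinal.opow_le_opow_right omega0_pos
        rwa [Ordinal.add_one_eq_succ, Order.succ_le_iff]

/-! ### Upper bounds -/

theorem mul_nat_lt_ord {κ : Cardinal} (hκ : ℵ₀ ≤ κ) {a c : Ordinal}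
    (ha : a < κ.ord) (hc : c < ω) : a * c < κ.ord := by
  rw [Cardinal.lt_ord, Ordinal.card_mul]
  have hc' : c.card < ℵ₀ := by
    rw [← Cardinal.lt_ord, Cardinal.ord_aleph0]
    · exact hc
  exact Cardinal.mul_lt_of_lt hκ (Cardinal.lt_ord.1 ha) (hc'.trans_le hκ)

theorem hatMono_lt {η : Ordinal} (h : η < ω ^ ω) : hatMono η < (ℵ_ ω).ord := by
  rcases eq_or_ne η 0 with rfl | h0
  · rw [hatMono, if_pos rfl]
    have h1 : (ℵ₀ : Cardinal) < ℵ_ ω := by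
      rw [← Cardinal.aleph_zero]; exact aleph_lt_aleph.2 omega0_pos
    calc ω = (ℵ₀ : Cardinal).ord := Cardinal.ord_aleph0.symm
      _ < _ := Cardinal.ord_lt_ord.2 h1
  have hlog : log ω η < ω := (Ordinal.lt_opow_iff_log_lt one_lt_omega0 h0).1 h
  obtain ⟨n, hn⟩ := Ordinal.lt_omega0.1 hlog
  have hG : cnfSum f0 η < (ℵ_ ((n : Ordinal) + 1 + 1)).ord := by
    apply cnfSum_lt_of_lt
    · exact lt_of_lt_of_le omega0_pos (by
        rw [← Cardinal.ord_aleph0]; exact Cardinal.ord_le_ord.2 (aleph0_le_aleph _))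
    · exact Ordinal.isPrincipal_add_ord (aleph0_le_aleph _)
    · exact fun a c ha hc => mul_nat_lt_ord (aleph0_le_aleph _) ha hc
    · intro m hm
      rw [hn] at hm
      rw [f0]
      apply Cardinal.ord_lt_ord.2
      apply aleph_lt_aleph.2
      calc m + 1 ≤ (n : Ordinal) + 1 := by
            rw [Ordinal.add_one_eq_succ, Ordinal.add_one_eq_succ]
            exact Order.succ_le_succ hm
        _ < (n : Ordinal) + 1 + 1 := by
            rw [Ordinal.add_one_eq_succ ((n : Ordinal) + 1)]
            exact Order.lt_succ _
  calc hatMono η = ω ^ cnfSum f0 η := hatMono_eq h0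
    _ < ω ^ (ℵ_ ((n : Ordinal) + 1 + 1)).ord := by
        rw [Ordinal.opow_lt_opow_iff_right one_lt_omega0]; exact hG
    _ = (ℵ_ ((n : Ordinal) + 1 + 1)).ord := omega0_opow_ord_aleph_succ _
    _ < (ℵ_ ω).ord := by
        apply Cardinal.ord_lt_ord.2
        apply aleph_lt_aleph.2
        have : ((n : Ordinal) + 1 + 1) = ((n + 2 : ℕ) : Ordinal) := by
          push_cast
          rw [add_assoc, one_add_one_eq_two]
        rw [this]
        exact Ordinal.nat_lt_omega0 _

theorem hatFn_eq (ξ : Ordinal) : hatFn ξ = cnfSum hatMono ξ := rfl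

end HatAux

open HatAux

/-- The map `ξ ↦ ξ̂` is strictly increasing on `(0, ω^{ω^ω})`, and
`ω ≤ ξ̂ < ω_ω` for all `0 < ξ < ω^{ω^ω}`. -/
theorem hat_strictMono_and_bounds :
    (∀ ξ ζ : Ordinal, 0 < ξ → ξ < ζ →
        ζ < Ordinal.omega0 ^ (Ordinal.omega0 ^ Ordinal.omega0) → hatFn ξ < hatFn ζ) ∧
    (∀ ξ : Ordinal, 0 < ξ → ξ < Ordinal.omega0 ^ (Ordinal.omega0 ^ Ordinal.omega0) →
        Ordinal.omega0 ≤ hatFn ξ ∧ hatFn ξ < (Cardinal.aleph Ordinal.omega0).ord) := by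
  constructor
  · intro ξ ζ _ hξζ _
    rw [hatFn_eq, hatFn_eq]
    exact cnfSum_strictMono hmω hmp hmmul ζ ξ hξζ
  · intro ξ h0 hlt
    have hξ0 : ξ ≠ 0 := h0.ne'
    constructor
    · rw [hatFn_eq]
      exact (hmω _).trans (le_cnfSum hmω hξ0)
    · rw [hatFn_eq]
      have hlog : log ω ξ < ω ^ ω :=
        (Ordinal.lt_opow_iff_log_lt one_lt_omega0 hξ0).1 hlt
      apply cnfSum_lt_of_lt
      · exact lt_of_lt_of_le omega0_pos (by
          rw [← Cardinal.ord_aleph0]; exact Cardinal.ord_le_ord.2 (aleph0_le_aleph _))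
      · exact Ordinal.isPrincipal_add_ord (aleph0_le_aleph _)
      · exact fun a c ha hc => mul_nat_lt_ord (aleph0_le_aleph _) ha hc
      · exact fun η hη => hatMono_lt (hη.trans_lt hlog)
end
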